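/- Euler's relation: ζ(2,1) = ζ(3), i.e., ∑_{m > n ≥ 1} 1/(m^2 n) = ∑_{m ≥ 1} 1/m^3. -/

import Mathlib

open Finset Filter Topology

/-- Double zeta value `ζ(a,b) = ∑_{m > n ≥ 1} 1/(m^a n^b)`. -/
noncomputable def doubleZeta (a b : ℕ) : ℝ :=
  ∑' p : {p : ℕ × ℕ // 1 ≤ p.2 ∧ p.2 < p.1}, 1 / ((p.1.1 : ℝ) ^ a * (p.1.2 : ℝ) ^ b)

/- ### Auxiliary definitions -/

noncomputable def ezF1 (p : ℕ × ℕ) : ℝ := 1 / (((p.1 : ℝ) + p.2 + 2) ^ 2 * ((p.1 : ℝ) + 1))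

noncomputable def ezFS (p : ℕ × ℕ) : ℝ :=
  1 / (((p.1 : ℝ) + p.2 + 2) * (((p.1 : ℝ) + 1) * ((p.2 : ℝ) + 1)))

noncomputable def ezH (k : ℕ) : ℝ := ∑ j ∈ Finset.range (k + 1), 1 / ((j : ℝ) + 1)

noncomputable def ezFcol (k : ℕ) : ℝ := 1 / ((k : ℝ) + 1) ^ 2 * ezH k

noncomputable def ezG (k : ℕ) : ℝ := 1 / ((k : ℝ) + 2) ^ 2 * ezH k

/- ### Telescoping sums -/

lemma ez_tendsto_inv (c : ℝ) : Tendsto (fun N : ℕ => 1 / ((N : ℝ) + c)) atTop (𝓝 0) := by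
  simp only [one_div]
  exact tendsto_inv_atTop_zero.comp (tendsto_atTop_add_const_right atTop c tendsto_natCast_atTop_atTop)

lemma ez_telescope (c : ℕ) :
    HasSum (fun n : ℕ => 1 / ((n : ℝ) + c + 1) - 1 / ((n : ℝ) + c + 2)) (1 / ((c : ℝ) + 1)) := by
  have hnn : ∀ n : ℕ, 0 ≤ 1 / ((n : ℝ) + c + 1) - 1 / ((n : ℝ) + c + 2) := by
    intro n
    have h1 : (0:ℝ) < (n : ℝ) + c + 1 := by positivity
    have h2 : ((n : ℝ) + c + 1) ≤ (n : ℝ) + c + 2 := by linarith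
    have := one_div_le_one_div_of_le h1 h2
    linarith
  rw [hasSum_iff_tendsto_nat_of_nonneg hnn]
  have key : ∀ N : ℕ, ∑ i ∈ Finset.range N, (1 / ((i : ℝ) + c + 1) - 1 / ((i : ℝ) + c + 2))
      = 1 / ((c : ℝ) + 1) - 1 / ((N : ℝ) + c + 1) := by
    intro N
    have h2 : ∑ i ∈ Finset.range N, (1 / ((i : ℝ) + c + 1) - 1 / ((i : ℝ) + c + 2))
        = ∑ i ∈ Finset.range N, ((fun i : ℕ => 1 / ((i : ℝ) + c + 1)) i
            - (fun i : ℕ => 1 / ((i : ℝ) + c + 1)) (i + 1)) := by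
      apply Finset.sum_congr rfl
      intro i _
      push_cast
      ring_nf
    rw [h2, Finset.sum_range_sub']
    norm_num
  simp only [key]
  have := (ez_tendsto_inv ((c : ℝ) + 1)).const_sub (1 / ((c : ℝ) + 1))
  simpa using this.congr (fun N => by ring_nf)

lemma ez_harmonic_hasSum (k : ℕ) :
    HasSum (fun n : ℕ => 1 / ((n : ℝ) + 1) - 1 / ((n : ℝ) + k + 2)) (ezH k) := by
  have hterm : ∀ n : ℕ, 1 / ((n : ℝ) + 1) - 1 / ((n : ℝ) + k + 2)
      = ∑ j ∈ Finset.range (k + 1), (1 / ((n : ℝ) + j + 1) - 1 / ((n : ℝ) + j + 2)) := by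
    intro n
    have h2 : ∑ j ∈ Finset.range (k + 1), (1 / ((n : ℝ) + j + 1) - 1 / ((n : ℝ) + j + 2))
        = ∑ j ∈ Finset.range (k + 1), ((fun j : ℕ => 1 / ((n : ℝ) + j + 1)) j
            - (fun j : ℕ => 1 / ((n : ℝ) + j + 1)) (j + 1)) := by
      apply Finset.sum_congr rfl
      intro j _
      push_cast
      ring_nf
    rw [h2, Finset.sum_range_sub']
    push_cast
    ring_nf
  have hsum : HasSum (fun n : ℕ => ∑ j ∈ Finset.range (k + 1),
      (1 / ((n : ℝ) + j + 1) - 1 / ((n : ℝ) + j + 2))) (ezH k) := by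
    unfold ezH
    exact hasSum_sum (fun j _ => ez_telescope j)
  simp only [hterm]
  exact hsum


/- ### Summability -/

lemma ez_rpow32 (a : ℝ) (ha : 0 ≤ a) : a ^ ((3:ℝ)/2) = a * Real.sqrt a := by
  rw [Real.sqrt_eq_rpow, show (3:ℝ)/2 = 1 + 1/2 by norm_num,
    Real.rpow_add' ha (by norm_num), Real.rpow_one]

lemma ez_summable32 : Summable (fun n : ℕ => ((n : ℝ) + 1) ^ (-(3/2) : ℝ)) := by
  have h : Summable (fun n : ℕ => (n : ℝ) ^ (-(3/2) : ℝ)) :=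
    Real.summable_nat_rpow.mpr (by norm_num)
  exact ((summable_nat_add_iff 1).mpr h).congr (fun n => by push_cast; norm_num)

lemma ez_comp_summable : Summable (fun p : ℕ × ℕ =>
    ((p.1 : ℝ) + 1) ^ (-(3/2) : ℝ) * ((p.2 : ℝ) + 1) ^ (-(3/2) : ℝ)) :=
  ez_summable32.mul_of_nonneg ez_summable32 (fun n => by positivity) (fun n => by positivity)

lemma ez_bound (a b c : ℝ) (ha : 1 ≤ a) (hb : 1 ≤ b) (hc : (a + b) * a * b ≤ c) :
    1 / c ≤ a ^ (-(3/2) : ℝ) * b ^ (-(3/2) : ℝ) := by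
  have ha0 : (0:ℝ) ≤ a := by linarith
  have hb0 : (0:ℝ) ≤ b := by linarith
  rw [Real.rpow_neg ha0, Real.rpow_neg hb0, ez_rpow32 a ha0, ez_rpow32 b hb0,
    ← mul_inv, ← one_div]
  have hsa : (0:ℝ) < Real.sqrt a := Real.sqrt_pos.mpr (by linarith)
  have hsb : (0:ℝ) < Real.sqrt b := Real.sqrt_pos.mpr (by linarith)
  apply one_div_le_one_div_of_le (by positivity)
  have h1 : Real.sqrt a * Real.sqrt b = Real.sqrt (a * b) := (Real.sqrt_mul ha0 b).symm
  have h2 : Real.sqrt (a * b) ≤ a + b := by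
    calc Real.sqrt (a * b) ≤ Real.sqrt ((a + b) ^ 2) := Real.sqrt_le_sqrt (by nlinarith)
      _ = a + b := Real.sqrt_sq (by linarith)
  calc a * Real.sqrt a * (b * Real.sqrt b) = a * b * (Real.sqrt a * Real.sqrt b) := by ring
    _ = a * b * Real.sqrt (a * b) := by rw [h1]
    _ ≤ a * b * (a + b) := by
        apply mul_le_mul_of_nonneg_left h2 (by positivity)
    _ = (a + b) * a * b := by ring
    _ ≤ c := hc

lemma ez_f1_summable : Summable ezF1 := by
  apply ez_comp_summable.of_nonneg_of_le (fun p => by unfold ezF1; positivity)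
  intro p
  unfold ezF1
  have hx : (0:ℝ) ≤ (p.1 : ℝ) := Nat.cast_nonneg _
  have hy : (0:ℝ) ≤ (p.2 : ℝ) := Nat.cast_nonneg _
  apply ez_bound ((p.1 : ℝ) + 1) ((p.2 : ℝ) + 1) _ (by linarith) (by linarith)
  nlinarith [mul_nonneg (mul_nonneg (by linarith : (0:ℝ) ≤ (p.1:ℝ)+(p.2:ℝ)+2)
    (by linarith : (0:ℝ) ≤ (p.1:ℝ)+1)) (by linarith : (0:ℝ) ≤ (p.1:ℝ)+1)]

lemma ez_fS_summable : Summable ezFS := by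
  apply ez_comp_summable.of_nonneg_of_le (fun p => by unfold ezFS; positivity)
  intro p
  unfold ezFS
  have hx : (0:ℝ) ≤ (p.1 : ℝ) := Nat.cast_nonneg _
  have hy : (0:ℝ) ≤ (p.2 : ℝ) := Nat.cast_nonneg _
  apply ez_bound ((p.1 : ℝ) + 1) ((p.2 : ℝ) + 1) _ (by linarith) (by linarith)
  nlinarith


/- ### Equivalences -/

def ezE1 : ℕ × ℕ ≃ {p : ℕ × ℕ // 1 ≤ p.2 ∧ p.2 < p.1} where
  toFun x := ⟨(x.1 + x.2 + 2, x.1 + 1), by omega⟩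
  invFun q := (q.1.2 - 1, q.1.1 - q.1.2 - 1)
  left_inv x := by obtain ⟨a, b⟩ := x; simp; omega
  right_inv q := by
    obtain ⟨⟨m, n⟩, h1, h2⟩ := q
    apply Subtype.ext
    simp only [Prod.mk.injEq]
    omega

def ezE2 : (Σ k : ℕ, Fin (k + 1)) ≃ {p : ℕ × ℕ // 1 ≤ p.2 ∧ p.2 < p.1} where
  toFun x := ⟨(x.1 + 2, x.2.1 + 1), by have := x.2.2; omega⟩
  invFun q := ⟨q.1.1 - 2, ⟨q.1.2 - 1, by have h1 := q.2.1; have h2 := q.2.2; omega⟩⟩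
  left_inv x := by
    obtain ⟨k, j, hj⟩ := x
    rfl
  right_inv q := by
    obtain ⟨⟨m, n⟩, h1, h2⟩ := q
    apply Subtype.ext
    simp only [Prod.mk.injEq]
    omega

/- ### Main theorem -/

theorem euler_zeta_two_one_eq_zeta_three :
    doubleZeta 2 1 = ∑' m : ℕ, 1 / ((m : ℝ) + 1) ^ 3 := by
  set g : {p : ℕ × ℕ // 1 ≤ p.2 ∧ p.2 < p.1} → ℝ :=
    fun q => 1 / ((q.1.1 : ℝ) ^ 2 * (q.1.2 : ℝ) ^ 1) with hgdef
  have hge : ∀ p : ℕ × ℕ, ezF1 p = g (ezE1 p) := by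
    rintro ⟨a, b⟩
    simp only [hgdef, ezE1, ezF1, Equiv.coe_fn_mk]
    push_cast
    ring_nf
  have hsub : Summable g := by
    rw [← ezE1.summable_iff]
    exact ez_f1_summable.congr hge
  have hA : doubleZeta 2 1 = ∑' p : ℕ × ℕ, ezF1 p := by
    rw [doubleZeta, ← ezE1.tsum_eq g]
    exact (tsum_congr hge).symm
  -- sigma grouping: doubleZeta 2 1 = ∑' k, ezG k
  have hσ : Summable (fun x : Σ k : ℕ, Fin (k + 1) => g (ezE2 x)) := by
    rw [show (fun x : Σ k : ℕ, Fin (k + 1) => g (ezE2 x)) = g ∘ ezE2 from rfl,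
      ezE2.summable_iff]
    exact hsub
  have hA2 : doubleZeta 2 1 = ∑' k, ezG k := by
    rw [doubleZeta, ← ezE2.tsum_eq g, Summable.tsum_sigma hσ]
    apply tsum_congr
    intro k
    rw [tsum_fintype]
    have : ∀ j : Fin (k + 1), g (ezE2 ⟨k, j⟩)
        = 1 / ((k : ℝ) + 2) ^ 2 * (1 / ((j.1 : ℝ) + 1)) := by
      intro j
      simp only [hgdef, ezE2, Equiv.coe_fn_mk]
      push_cast
      rw [pow_one, ← one_div_mul_one_div]
    rw [Finset.sum_congr rfl (fun j _ => this j), ← Finset.mul_sum,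
      Fin.sum_univ_eq_sum_range (fun j => 1 / ((j : ℝ) + 1))]
    rfl
  -- symmetrization
  have hswap : ∑' p : ℕ × ℕ, ezF1 (p.2, p.1) = ∑' p : ℕ × ℕ, ezF1 p := by
    exact (Equiv.prodComm ℕ ℕ).tsum_eq ezF1
  have h2' : Summable (fun p : ℕ × ℕ => ezF1 (p.2, p.1)) := by
    rw [show (fun p : ℕ × ℕ => ezF1 (p.2, p.1)) = ezF1 ∘ (Equiv.prodComm ℕ ℕ) from rfl,
      (Equiv.prodComm ℕ ℕ).summable_iff]
    exact ez_f1_summable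
  have hCC : (∑' p : ℕ × ℕ, ezF1 p) + (∑' p : ℕ × ℕ, ezF1 p) = ∑' p : ℕ × ℕ, ezFS p := by
    nth_rewrite 2 [← hswap]
    rw [← Summable.tsum_add ez_f1_summable h2']
    apply tsum_congr
    rintro ⟨a, b⟩
    simp only [ezF1, ezFS]
    have h1 : (0:ℝ) < (a : ℝ) + b + 2 := by positivity
    have h2 : (0:ℝ) < (a : ℝ) + 1 := by positivity
    have h3 : (0:ℝ) < (b : ℝ) + 1 := by positivity
    have hb2 : (b : ℝ) + a + 2 = (a : ℝ) + b + 2 := by ring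
    rw [hb2]
    field_simp
    ring
  -- fiberwise sum
  have hinner : ∀ k : ℕ, HasSum (fun n : ℕ => ezFS (k, n)) (ezFcol k) := by
    intro k
    have h1 : (fun n : ℕ => ezFS (k, n))
        = fun n : ℕ => 1 / ((k : ℝ) + 1) ^ 2 * (1 / ((n : ℝ) + 1) - 1 / ((n : ℝ) + k + 2)) := by
      funext n
      simp only [ezFS]
      have hk : (0:ℝ) < (k : ℝ) + 1 := by positivity
      have hn : (0:ℝ) < (n : ℝ) + 1 := by positivity
      have hs : (0:ℝ) < (k : ℝ) + n + 2 := by positivity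
      have hs2 : (0:ℝ) < (n : ℝ) + k + 2 := by positivity
      field_simp
      ring
    rw [h1]
    exact (ez_harmonic_hasSum k).mul_left _
  have hcol : HasSum ezFcol (∑' p : ℕ × ℕ, ezFS p) :=
    HasSum.prod_fiberwise ez_fS_summable.hasSum hinner
  have hFsummable : Summable ezFcol := hcol.summable
  -- zeta(3) tail sums
  have hzsum : Summable (fun m : ℕ => 1 / ((m : ℝ) + 1) ^ 3) := by
    have h := Real.summable_one_div_nat_pow.mpr (show 1 < 3 by norm_num)
    exact ((summable_nat_add_iff 1).mpr h).congr (fun n => by push_cast; ring_nf)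
  have hz2 : Summable (fun k : ℕ => 1 / ((k : ℝ) + 2) ^ 3) :=
    ((summable_nat_add_iff 1).mpr hzsum).congr (fun n => by push_cast; ring_nf)
  have hHmono : ∀ k : ℕ, ezH k ≤ ezH (k + 1) := by
    intro k
    unfold ezH
    rw [Finset.sum_range_succ (n := k + 1)]
    have : (0:ℝ) ≤ 1 / ((k + 1 : ℕ) + 1 : ℝ) := by positivity
    linarith
  have hHnonneg : ∀ k : ℕ, 0 ≤ ezH k := by
    intro k
    unfold ezH
    apply Finset.sum_nonneg
    intro j _
    positivity
  have hGsum : Summable ezG := by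
    apply ((summable_nat_add_iff 1).mpr hFsummable).of_nonneg_of_le
    · intro k
      unfold ezG
      have := hHnonneg k
      positivity
    · intro k
      show ezG k ≤ ezFcol (k + 1)
      unfold ezG ezFcol
      have hcast : ((k + 1 : ℕ) : ℝ) + 1 = (k : ℝ) + 2 := by push_cast; ring
      rw [hcast]
      apply mul_le_mul_of_nonneg_left (hHmono k) (by positivity)
  have hsplit : ∀ k : ℕ, ezFcol (k + 1) = ezG k + 1 / ((k : ℝ) + 2) ^ 3 := by
    intro k
    unfold ezFcol ezG ezH
    rw [Finset.sum_range_succ (n := k + 1)]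
    have hcast : ((k + 1 : ℕ) : ℝ) + 1 = (k : ℝ) + 2 := by push_cast; ring
    rw [hcast]
    generalize (∑ j ∈ Finset.range (k + 1), 1 / ((j : ℝ) + 1)) = S
    have h : ((k : ℝ) + 2) ≠ 0 := by positivity
    field_simp
  have main1 : doubleZeta 2 1 + doubleZeta 2 1 = ∑' k, ezFcol k := by
    rw [hA, hCC, hcol.tsum_eq]
  have main2 : ∑' k, ezFcol k = ezFcol 0 + ∑' k, ezFcol (k + 1) :=
    Summable.tsum_eq_zero_add hFsummable
  have main3 : ∑' k, ezFcol (k + 1)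
      = (∑' k, ezG k) + ∑' k : ℕ, 1 / ((k : ℝ) + 2) ^ 3 := by
    exact (tsum_congr hsplit).trans (Summable.tsum_add hGsum hz2)
  have main4 : (∑' m : ℕ, 1 / ((m : ℝ) + 1) ^ 3) = 1 + ∑' k : ℕ, 1 / ((k : ℝ) + 2) ^ 3 := by
    rw [Summable.tsum_eq_zero_add hzsum]
    norm_num
    exact tsum_congr (fun n => by push_cast; ring_nf)
  have hF0 : ezFcol 0 = 1 := by
    unfold ezFcol ezH
    norm_num
  rw [hA2] at main1 ⊢
  linarith [main1, main2, main3, main4]
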